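/- arXiv:1501.06937 — 3 statements merged into one kernel-verified Lean document; each statement's English description precedes it below -/
import Mathlib

section
/- Every vertex i ∈ {1,...,m} of the graph Γ_m has degree 5. -/
/-- One-directional edge description of the graph `Γ_m`, on labels `1,…,m+6`. -/
def rel0 (m a b : ℕ) : Prop :=
  (1 ≤ a ∧ a ≤ m - 1 ∧ b = a + 1) ∨ (a = 1 ∧ b = m) ∨
  (a = m+1 ∧ 1 ≤ b ∧ b ≤ m ∧ (b % 4 = 1 ∨ b % 4 = 2)) ∨
  (a = m+2 ∧ 1 ≤ b ∧ b ≤ m ∧ (b % 4 = 2 ∨ b % 4 = 3)) ∨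
  (a = m+3 ∧ 1 ≤ b ∧ b ≤ m ∧ (b % 4 = 3 ∨ b % 4 = 0)) ∨
  (a = m+4 ∧ 1 ≤ b ∧ b ≤ m ∧ (b % 4 = 0 ∨ b % 4 = 1)) ∨
  (a = m+5 ∧ 1 ≤ b ∧ b ≤ m ∧ b % 2 = 1) ∨
  (a = m+6 ∧ 1 ≤ b ∧ b ≤ m ∧ b % 2 = 0) ∨
  (a = m+1 ∧ b = m+5) ∨ (a = m+3 ∧ b = m+5) ∨
  (a = m+2 ∧ b = m+6) ∨ (a = m+4 ∧ b = m+6)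

instance (m a b : ℕ) : Decidable (rel0 m a b) := by unfold rel0; infer_instance

/-- The graph `Γ_m` on vertex set `{1,…,m+6}`, encoded on `Fin (m+6)`
    where the vertex `v : Fin (m+6)` carries the label `v.val + 1`. -/
def Gamma (m : ℕ) : SimpleGraph (Fin (m+6)) where
  Adj a b := a ≠ b ∧ (rel0 m (a.val+1) (b.val+1) ∨ rel0 m (b.val+1) (a.val+1))
  symm := by constructor; intro a b h; exact ⟨fun e => h.1 e.symm, h.2.symm⟩
  loopless := by constructor; intro a h; exact h.1 rfl

instance (m : ℕ) : DecidableRel (Gamma m).Adj := fun a b =>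
  inferInstanceAs (Decidable (a ≠ b ∧ _))

/-- The permutation `g = (1,2,…,m)(m+1,m+2,m+3,m+4)(m+5,m+6)` on labels,
    written on `Fin (m+6)` (label = index + 1). -/
def gFun (m : ℕ) (v : Fin (m+6)) : Fin (m+6) :=
  if h : v.val < m then ⟨(v.val + 1) % m, lt_of_lt_of_le (Nat.mod_lt _ (by omega)) (by omega)⟩
  else if h2 : v.val < m + 3 then ⟨v.val + 1, by omega⟩
  else if h3 : v.val = m + 3 then ⟨m, by omega⟩
  else if h4 : v.val = m + 4 then ⟨m + 5, by omega⟩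
  else ⟨m + 4, by omega⟩

lemma card_five {α : Type*} [DecidableEq α] {a b c d e : α}
    (h1 : a ≠ b) (h2 : a ≠ c) (h3 : a ≠ d) (h4 : a ≠ e) (h5 : b ≠ c) (h6 : b ≠ d)
    (h7 : b ≠ e) (h8 : c ≠ d) (h9 : c ≠ e) (h10 : d ≠ e) :
    ({a, b, c, d, e} : Finset α).card = 5 := by
  rw [Finset.card_insert_of_notMem (by simp [h1, h2, h3, h4]),
      Finset.card_insert_of_notMem (by simp [h5, h6, h7]),
      Finset.card_insert_of_notMem (by simp [h8, h9]),
      Finset.card_insert_of_notMem (by simp [h10]),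
      Finset.card_singleton]

/-- every vertex in `{1,…,m}` has degree `5` in `Γ_m`. -/
theorem stmt2 (n m : ℕ) (hn : 2 ≤ n) (hm : m = 2 ^ n) :
    ∀ v : Fin (m + 6), v.val < m → (Gamma m).degree v = 5 := by
  have hd4 : 4 ∣ m := by
    rw [hm]; exact (pow_dvd_pow 2 hn : (2:ℕ)^2 ∣ 2^n)
  have hm4 : 4 ≤ m := Nat.le_of_dvd (by rw [hm]; positivity) hd4
  intro v hv
  have hdeg : (Gamma m).degree v = ((Gamma m).neighborFinset v).card := rfl
  have fne : ∀ (a b : ℕ) (ha : a < m+6) (hb : b < m+6), a ≠ b →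
      (⟨a, ha⟩ : Fin (m+6)) ≠ ⟨b, hb⟩ := fun a b ha hb h => by simpa [Fin.ext_iff] using h
  rcases Nat.lt_or_ge v.val 1 with h0 | h1
  · -- v.val = 0, label 1
    have key : (Gamma m).neighborFinset v =
        ({⟨1, by omega⟩, ⟨m-1, by omega⟩, ⟨m, by omega⟩, ⟨m+3, by omega⟩, ⟨m+4, by omega⟩} : Finset (Fin (m+6))) := by
      apply Finset.ext
      intro u
      rw [SimpleGraph.mem_neighborFinset]
      show (v ≠ u ∧ (rel0 m (v.val+1) (u.val+1) ∨ rel0 m (u.val+1) (v.val+1))) ↔ _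
      simp only [rel0, Finset.mem_insert, Finset.mem_singleton, ne_eq, Fin.ext_iff]
      constructor
      · intro h
        omega
      · intro h
        rcases h with h | h | h | h | h
        · exact ⟨by omega, Or.inl (Or.inl (by omega))⟩
        · exact ⟨by omega, Or.inl (Or.inr <| Or.inl (by omega))⟩
        · exact ⟨by omega, Or.inr (Or.inr <| Or.inr <| Or.inl (by omega))⟩
        · exact ⟨by omega, Or.inr (Or.inr <| Or.inr <| Or.inr <| Or.inr <| Or.inr <| Or.inl (by omega))⟩
        · exact ⟨by omega, Or.inr (Or.inr <| Or.inr <| Or.inr <| Or.inr <| Or.inr <| Or.inr <| Or.inl (by omega))⟩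
    rw [hdeg, key]
    exact card_five (fne _ _ _ _ (by omega)) (fne _ _ _ _ (by omega)) (fne _ _ _ _ (by omega)) (fne _ _ _ _ (by omega)) (fne _ _ _ _ (by omega)) (fne _ _ _ _ (by omega)) (fne _ _ _ _ (by omega)) (fne _ _ _ _ (by omega)) (fne _ _ _ _ (by omega)) (fne _ _ _ _ (by omega))
  · rcases Nat.lt_or_ge v.val (m-1) with hlt | hge
    · -- 1 ≤ v.val ≤ m-2
      have h4v : (v.val+1) % 4 = 0 ∨ (v.val+1) % 4 = 1 ∨ (v.val+1) % 4 = 2 ∨ (v.val+1) % 4 = 3 := by omega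
      rcases h4v with hr | hr | hr | hr
      · have key : (Gamma m).neighborFinset v =
            ({⟨v.val-1, by omega⟩, ⟨v.val+1, by omega⟩, ⟨m+2, by omega⟩, ⟨m+3, by omega⟩, ⟨m+5, by omega⟩} : Finset (Fin (m+6))) := by
          apply Finset.ext
          intro u
          rw [SimpleGraph.mem_neighborFinset]
          show (v ≠ u ∧ (rel0 m (v.val+1) (u.val+1) ∨ rel0 m (u.val+1) (v.val+1))) ↔ _
          simp only [rel0, Finset.mem_insert, Finset.mem_singleton, ne_eq, Fin.ext_iff]
          constructor
          · intro h
            omega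
          · intro h
            rcases h with h | h | h | h | h
            · exact ⟨by omega, Or.inr (Or.inl (by omega))⟩
            · exact ⟨by omega, Or.inl (Or.inl (by omega))⟩
            · exact ⟨by omega, Or.inr (Or.inr <| Or.inr <| Or.inr <| Or.inr <| Or.inl (by omega))⟩
            · exact ⟨by omega, Or.inr (Or.inr <| Or.inr <| Or.inr <| Or.inr <| Or.inr <| Or.inl (by omega))⟩
            · exact ⟨by omega, Or.inr (Or.inr <| Or.inr <| Or.inr <| Or.inr <| Or.inr <| Or.inr <| Or.inr <| Or.inl (by omega))⟩
        rw [hdeg, key]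
        exact card_five (fne _ _ _ _ (by omega)) (fne _ _ _ _ (by omega)) (fne _ _ _ _ (by omega)) (fne _ _ _ _ (by omega)) (fne _ _ _ _ (by omega)) (fne _ _ _ _ (by omega)) (fne _ _ _ _ (by omega)) (fne _ _ _ _ (by omega)) (fne _ _ _ _ (by omega)) (fne _ _ _ _ (by omega))
      · have key : (Gamma m).neighborFinset v =
            ({⟨v.val-1, by omega⟩, ⟨v.val+1, by omega⟩, ⟨m, by omega⟩, ⟨m+3, by omega⟩, ⟨m+4, by omega⟩} : Finset (Fin (m+6))) := by
          apply Finset.ext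
          intro u
          rw [SimpleGraph.mem_neighborFinset]
          show (v ≠ u ∧ (rel0 m (v.val+1) (u.val+1) ∨ rel0 m (u.val+1) (v.val+1))) ↔ _
          simp only [rel0, Finset.mem_insert, Finset.mem_singleton, ne_eq, Fin.ext_iff]
          constructor
          · intro h
            omega
          · intro h
            rcases h with h | h | h | h | h
            · exact ⟨by omega, Or.inr (Or.inl (by omega))⟩
            · exact ⟨by omega, Or.inl (Or.inl (by omega))⟩
            · exact ⟨by omega, Or.inr (Or.inr <| Or.inr <| Or.inl (by omega))⟩
            · exact ⟨by omega, Or.inr (Or.inr <| Or.inr <| Or.inr <| Or.inr <| Or.inr <| Or.inl (by omega))⟩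
            · exact ⟨by omega, Or.inr (Or.inr <| Or.inr <| Or.inr <| Or.inr <| Or.inr <| Or.inr <| Or.inl (by omega))⟩
        rw [hdeg, key]
        exact card_five (fne _ _ _ _ (by omega)) (fne _ _ _ _ (by omega)) (fne _ _ _ _ (by omega)) (fne _ _ _ _ (by omega)) (fne _ _ _ _ (by omega)) (fne _ _ _ _ (by omega)) (fne _ _ _ _ (by omega)) (fne _ _ _ _ (by omega)) (fne _ _ _ _ (by omega)) (fne _ _ _ _ (by omega))
      · have key : (Gamma m).neighborFinset v =
            ({⟨v.val-1, by omega⟩, ⟨v.val+1, by omega⟩, ⟨m, by omega⟩, ⟨m+1, by omega⟩, ⟨m+5, by omega⟩} : Finset (Fin (m+6))) := by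
          apply Finset.ext
          intro u
          rw [SimpleGraph.mem_neighborFinset]
          show (v ≠ u ∧ (rel0 m (v.val+1) (u.val+1) ∨ rel0 m (u.val+1) (v.val+1))) ↔ _
          simp only [rel0, Finset.mem_insert, Finset.mem_singleton, ne_eq, Fin.ext_iff]
          constructor
          · intro h
            omega
          · intro h
            rcases h with h | h | h | h | h
            · exact ⟨by omega, Or.inr (Or.inl (by omega))⟩
            · exact ⟨by omega, Or.inl (Or.inl (by omega))⟩
            · exact ⟨by omega, Or.inr (Or.inr <| Or.inr <| Or.inl (by omega))⟩
            · exact ⟨by omega, Or.inr (Or.inr <| Or.inr <| Or.inr <| Or.inl (by omega))⟩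
            · exact ⟨by omega, Or.inr (Or.inr <| Or.inr <| Or.inr <| Or.inr <| Or.inr <| Or.inr <| Or.inr <| Or.inl (by omega))⟩
        rw [hdeg, key]
        exact card_five (fne _ _ _ _ (by omega)) (fne _ _ _ _ (by omega)) (fne _ _ _ _ (by omega)) (fne _ _ _ _ (by omega)) (fne _ _ _ _ (by omega)) (fne _ _ _ _ (by omega)) (fne _ _ _ _ (by omega)) (fne _ _ _ _ (by omega)) (fne _ _ _ _ (by omega)) (fne _ _ _ _ (by omega))
      · have key : (Gamma m).neighborFinset v =
            ({⟨v.val-1, by omega⟩, ⟨v.val+1, by omega⟩, ⟨m+1, by omega⟩, ⟨m+2, by omega⟩, ⟨m+4, by omega⟩} : Finset (Fin (m+6))) := by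
          apply Finset.ext
          intro u
          rw [SimpleGraph.mem_neighborFinset]
          show (v ≠ u ∧ (rel0 m (v.val+1) (u.val+1) ∨ rel0 m (u.val+1) (v.val+1))) ↔ _
          simp only [rel0, Finset.mem_insert, Finset.mem_singleton, ne_eq, Fin.ext_iff]
          constructor
          · intro h
            omega
          · intro h
            rcases h with h | h | h | h | h
            · exact ⟨by omega, Or.inr (Or.inl (by omega))⟩
            · exact ⟨by omega, Or.inl (Or.inl (by omega))⟩
            · exact ⟨by omega, Or.inr (Or.inr <| Or.inr <| Or.inr <| Or.inl (by omega))⟩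
            · exact ⟨by omega, Or.inr (Or.inr <| Or.inr <| Or.inr <| Or.inr <| Or.inl (by omega))⟩
            · exact ⟨by omega, Or.inr (Or.inr <| Or.inr <| Or.inr <| Or.inr <| Or.inr <| Or.inr <| Or.inl (by omega))⟩
        rw [hdeg, key]
        exact card_five (fne _ _ _ _ (by omega)) (fne _ _ _ _ (by omega)) (fne _ _ _ _ (by omega)) (fne _ _ _ _ (by omega)) (fne _ _ _ _ (by omega)) (fne _ _ _ _ (by omega)) (fne _ _ _ _ (by omega)) (fne _ _ _ _ (by omega)) (fne _ _ _ _ (by omega)) (fne _ _ _ _ (by omega))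
    · -- v.val = m-1, label m
      have hvm : v.val = m - 1 := by omega
      have key : (Gamma m).neighborFinset v =
          ({⟨m-2, by omega⟩, ⟨0, by omega⟩, ⟨m+2, by omega⟩, ⟨m+3, by omega⟩, ⟨m+5, by omega⟩} : Finset (Fin (m+6))) := by
        apply Finset.ext
        intro u
        rw [SimpleGraph.mem_neighborFinset]
        show (v ≠ u ∧ (rel0 m (v.val+1) (u.val+1) ∨ rel0 m (u.val+1) (v.val+1))) ↔ _
        simp only [rel0, Finset.mem_insert, Finset.mem_singleton, ne_eq, Fin.ext_iff]
        constructor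
        · intro h
          omega
        · intro h
          rcases h with h | h | h | h | h
          · exact ⟨by omega, Or.inr (Or.inl (by omega))⟩
          · exact ⟨by omega, Or.inr (Or.inr <| Or.inl (by omega))⟩
          · exact ⟨by omega, Or.inr (Or.inr <| Or.inr <| Or.inr <| Or.inr <| Or.inl (by omega))⟩
          · exact ⟨by omega, Or.inr (Or.inr <| Or.inr <| Or.inr <| Or.inr <| Or.inr <| Or.inl (by omega))⟩
          · exact ⟨by omega, Or.inr (Or.inr <| Or.inr <| Or.inr <| Or.inr <| Or.inr <| Or.inr <| Or.inr <| Or.inl (by omega))⟩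
      rw [hdeg, key]
      exact card_five (fne _ _ _ _ (by omega)) (fne _ _ _ _ (by omega)) (fne _ _ _ _ (by omega)) (fne _ _ _ _ (by omega)) (fne _ _ _ _ (by omega)) (fne _ _ _ _ (by omega)) (fne _ _ _ _ (by omega)) (fne _ _ _ _ (by omega)) (fne _ _ _ _ (by omega)) (fne _ _ _ _ (by omega))
end

section
/- There exists a graph on 10 vertices whose automorphism group is cyclic of order 4; specifically, the graph Γ_4 on vertices {1,...,10} (as defined) satisfies Aut(Γ_4) ≅ ℤ/4ℤ, generated by (1,2,3,4)(5,6,7,8)(9,10). -/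
open SimpleGraph

def gEquiv : Equiv (Fin 10) (Fin 10) :=
  ⟨gFun 4, gFun 4 ∘ gFun 4 ∘ gFun 4, by decide, by decide⟩

lemma gkey : ∀ a b : Fin 10, (Gamma 4).Adj (gEquiv a) (gEquiv b) ↔ (Gamma 4).Adj a b := by decide

def phi0 : Gamma 4 ≃g Gamma 4 := ⟨gEquiv, fun {a b} => gkey a b⟩

example : ∀ w : Fin 10, (Gamma 4).degree w = 4 → w = 8 ∨ w = 9 := by decide
example : ∀ w : Fin 10, (Gamma 4).Adj w 0 → (Gamma 4).Adj w 1 → w = 4 := by decide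
example : (Gamma 4).degree 8 = 4 := by decide

lemma phi0_pow : ∀ (n : ℕ) (v : Fin 10), (phi0 ^ n) v = (gFun 4)^[n] v
  | 0, v => rfl
  | n+1, v => by
      rw [pow_succ, RelIso.coe_mul, Function.comp_apply, Function.iterate_succ_apply]
      exact phi0_pow n (gFun 4 v)

lemma deg_iso (f : Gamma 4 ≃g Gamma 4) (v : Fin 10) :
    (Gamma 4).degree (f v) = (Gamma 4).degree v := by
  have himg : (Gamma 4).neighborFinset (f v) = ((Gamma 4).neighborFinset v).image f := by
    ext w
    simp only [SimpleGraph.mem_neighborFinset, Finset.mem_image]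
    constructor
    · intro h
      refine ⟨f.symm w, ?_, f.apply_symm_apply w⟩
      have h2 : (Gamma 4).Adj (f v) (f (f.symm w)) := by rwa [f.apply_symm_apply]
      exact f.map_adj_iff.mp h2
    · rintro ⟨u, hu, rfl⟩
      exact f.map_adj_iff.mpr hu
  rw [← SimpleGraph.card_neighborFinset_eq_degree, ← SimpleGraph.card_neighborFinset_eq_degree,
    himg, Finset.card_image_of_injective _ f.injective]

lemma classify (f : Gamma 4 ≃g Gamma 4) :
    f = phi0 ^ 0 ∨ f = phi0 ^ 1 ∨ f = phi0 ^ 2 ∨ f = phi0 ^ 3 := by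
  have hd := deg_iso f
  have hadj : ∀ a b : Fin 10, (Gamma 4).Adj a b → (Gamma 4).Adj (f a) (f b) :=
    fun a b h => f.map_adj_iff.mpr h
  have hinj := f.injective
  have D4c : ∀ w : Fin 10, (Gamma 4).degree w = 4 → w = 8 ∨ w = 9 := by decide
  have D2 : ∀ w : Fin 10, (Gamma 4).degree w = 5 → (Gamma 4).Adj w 8 → w = 0 ∨ w = 2 := by decide
  have D3 : ∀ w : Fin 10, (Gamma 4).degree w = 5 → (Gamma 4).Adj w 9 → w = 1 ∨ w = 3 := by decide
  have D5 : ∀ w : Fin 10, (Gamma 4).degree w = 5 → (Gamma 4).Adj w 1 → w = 0 ∨ w = 2 := by decide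
  have D7 : ∀ w : Fin 10, (Gamma 4).degree w = 5 → (Gamma 4).Adj w 3 → w = 0 ∨ w = 2 := by decide
  have CN01 : ∀ w : Fin 10, (Gamma 4).Adj w 0 → (Gamma 4).Adj w 1 → w = 4 := by decide
  have CN12 : ∀ w : Fin 10, (Gamma 4).Adj w 1 → (Gamma 4).Adj w 2 → w = 5 := by decide
  have CN23 : ∀ w : Fin 10, (Gamma 4).Adj w 2 → (Gamma 4).Adj w 3 → w = 6 := by decide
  have CN30 : ∀ w : Fin 10, (Gamma 4).Adj w 3 → (Gamma 4).Adj w 0 → w = 7 := by decide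
  rcases D4c (f 8) (by rw [hd]; decide) with h8 | h8 <;>
    rcases D4c (f 9) (by rw [hd]; decide) with h9 | h9
  · exact absurd (hinj (h8.trans h9.symm)) (by decide)
  · -- f 8 = 8, f 9 = 9
    rcases D2 (f 0) (by rw [hd]; decide) (h8 ▸ hadj 0 8 (by decide)) with h0 | h0
    · rcases D3 (f 1) (by rw [hd]; decide) (h9 ▸ hadj 1 9 (by decide)) with h1 | h1
      · -- identity
        rcases D2 (f 2) (by rw [hd]; decide) (h8 ▸ hadj 2 8 (by decide)) with h2 | h2
        · exact absurd (hinj (h2.trans h0.symm)) (by decide)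
        rcases D3 (f 3) (by rw [hd]; decide) (h9 ▸ hadj 3 9 (by decide)) with h3 | h3
        · exact absurd (hinj (h3.trans h1.symm)) (by decide)
        have h4 := CN01 (f 4) (h0 ▸ hadj 4 0 (by decide)) (h1 ▸ hadj 4 1 (by decide))
        have h5 := CN12 (f 5) (h1 ▸ hadj 5 1 (by decide)) (h2 ▸ hadj 5 2 (by decide))
        have h6 := CN23 (f 6) (h2 ▸ hadj 6 2 (by decide)) (h3 ▸ hadj 6 3 (by decide))
        have h7 := CN30 (f 7) (h3 ▸ hadj 7 3 (by decide)) (h0 ▸ hadj 7 0 (by decide))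
        refine Or.inl (RelIso.ext fun v => ?_)
        rw [phi0_pow]
        fin_cases v <;>
          first
          | exact h0.trans (by decide) | exact h1.trans (by decide)
          | exact h2.trans (by decide) | exact h3.trans (by decide)
          | exact h4.trans (by decide) | exact h5.trans (by decide)
          | exact h6.trans (by decide) | exact h7.trans (by decide)
          | exact h8.trans (by decide) | exact h9.trans (by decide)
      · -- f 0 = 0, f 1 = 3 : contradiction
        have h4 := CN30 (f 4) (h1 ▸ hadj 4 1 (by decide)) (h0 ▸ hadj 4 0 (by decide))
        exact absurd (h4 ▸ h8 ▸ hadj 4 8 (by decide)) (by decide)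
    · rcases D3 (f 1) (by rw [hd]; decide) (h9 ▸ hadj 1 9 (by decide)) with h1 | h1
      · -- f 0 = 2, f 1 = 1 : contradiction
        have h4 := CN12 (f 4) (h1 ▸ hadj 4 1 (by decide)) (h0 ▸ hadj 4 0 (by decide))
        exact absurd (h4 ▸ h8 ▸ hadj 4 8 (by decide)) (by decide)
      · -- f 0 = 2, f 1 = 3 : phi0^2
        rcases D2 (f 2) (by rw [hd]; decide) (h8 ▸ hadj 2 8 (by decide)) with h2 | h2
        swap
        · exact absurd (hinj (h2.trans h0.symm)) (by decide)
        rcases D3 (f 3) (by rw [hd]; decide) (h9 ▸ hadj 3 9 (by decide)) with h3 | h3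
        swap
        · exact absurd (hinj (h3.trans h1.symm)) (by decide)
        have h4 := CN23 (f 4) (h0 ▸ hadj 4 0 (by decide)) (h1 ▸ hadj 4 1 (by decide))
        have h5 := CN30 (f 5) (h1 ▸ hadj 5 1 (by decide)) (h2 ▸ hadj 5 2 (by decide))
        have h6 := CN01 (f 6) (h2 ▸ hadj 6 2 (by decide)) (h3 ▸ hadj 6 3 (by decide))
        have h7 := CN12 (f 7) (h3 ▸ hadj 7 3 (by decide)) (h0 ▸ hadj 7 0 (by decide))
        refine Or.inr (Or.inr (Or.inl (RelIso.ext fun v => ?_)))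
        rw [phi0_pow]
        fin_cases v <;>
          first
          | exact h0.trans (by decide) | exact h1.trans (by decide)
          | exact h2.trans (by decide) | exact h3.trans (by decide)
          | exact h4.trans (by decide) | exact h5.trans (by decide)
          | exact h6.trans (by decide) | exact h7.trans (by decide)
          | exact h8.trans (by decide) | exact h9.trans (by decide)
  · -- f 8 = 9, f 9 = 8
    rcases D3 (f 0) (by rw [hd]; decide) (h8 ▸ hadj 0 8 (by decide)) with h0 | h0
    · rcases D5 (f 1) (by rw [hd]; decide) (h0 ▸ hadj 1 0 (by decide)) with h1 | h1
      · -- f 0 = 1, f 1 = 0 : contradiction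
        have h4 := CN01 (f 4) (h1 ▸ hadj 4 1 (by decide)) (h0 ▸ hadj 4 0 (by decide))
        exact absurd (h4 ▸ h8 ▸ hadj 4 8 (by decide)) (by decide)
      · -- f 0 = 1, f 1 = 2 : phi0
        rcases D3 (f 2) (by rw [hd]; decide) (h8 ▸ hadj 2 8 (by decide)) with h2 | h2
        · exact absurd (hinj (h2.trans h0.symm)) (by decide)
        rcases D2 (f 3) (by rw [hd]; decide) (h9 ▸ hadj 3 9 (by decide)) with h3 | h3
        swap
        · exact absurd (hinj (h3.trans h1.symm)) (by decide)
        have h4 := CN12 (f 4) (h0 ▸ hadj 4 0 (by decide)) (h1 ▸ hadj 4 1 (by decide))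
        have h5 := CN23 (f 5) (h1 ▸ hadj 5 1 (by decide)) (h2 ▸ hadj 5 2 (by decide))
        have h6 := CN30 (f 6) (h2 ▸ hadj 6 2 (by decide)) (h3 ▸ hadj 6 3 (by decide))
        have h7 := CN01 (f 7) (h3 ▸ hadj 7 3 (by decide)) (h0 ▸ hadj 7 0 (by decide))
        refine Or.inr (Or.inl (RelIso.ext fun v => ?_))
        rw [phi0_pow]
        fin_cases v <;>
          first
          | exact h0.trans (by decide) | exact h1.trans (by decide)
          | exact h2.trans (by decide) | exact h3.trans (by decide)
          | exact h4.trans (by decide) | exact h5.trans (by decide)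
          | exact h6.trans (by decide) | exact h7.trans (by decide)
          | exact h8.trans (by decide) | exact h9.trans (by decide)
    · rcases D7 (f 1) (by rw [hd]; decide) (h0 ▸ hadj 1 0 (by decide)) with h1 | h1
      · -- f 0 = 3, f 1 = 0 : phi0^3
        rcases D3 (f 2) (by rw [hd]; decide) (h8 ▸ hadj 2 8 (by decide)) with h2 | h2
        swap
        · exact absurd (hinj (h2.trans h0.symm)) (by decide)
        rcases D2 (f 3) (by rw [hd]; decide) (h9 ▸ hadj 3 9 (by decide)) with h3 | h3
        · exact absurd (hinj (h3.trans h1.symm)) (by decide)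
        have h4 := CN30 (f 4) (h0 ▸ hadj 4 0 (by decide)) (h1 ▸ hadj 4 1 (by decide))
        have h5 := CN01 (f 5) (h1 ▸ hadj 5 1 (by decide)) (h2 ▸ hadj 5 2 (by decide))
        have h6 := CN12 (f 6) (h2 ▸ hadj 6 2 (by decide)) (h3 ▸ hadj 6 3 (by decide))
        have h7 := CN23 (f 7) (h3 ▸ hadj 7 3 (by decide)) (h0 ▸ hadj 7 0 (by decide))
        refine Or.inr (Or.inr (Or.inr (RelIso.ext fun v => ?_)))
        rw [phi0_pow]
        fin_cases v <;>
          first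
          | exact h0.trans (by decide) | exact h1.trans (by decide)
          | exact h2.trans (by decide) | exact h3.trans (by decide)
          | exact h4.trans (by decide) | exact h5.trans (by decide)
          | exact h6.trans (by decide) | exact h7.trans (by decide)
          | exact h8.trans (by decide) | exact h9.trans (by decide)
      · -- f 0 = 3, f 1 = 2 : contradiction
        have h4 := CN23 (f 4) (h1 ▸ hadj 4 1 (by decide)) (h0 ▸ hadj 4 0 (by decide))
        exact absurd (h4 ▸ h8 ▸ hadj 4 8 (by decide)) (by decide)
  · exact absurd (hinj (h8.trans h9.symm)) (by decide)

lemma phi0_pow4 : phi0 ^ (4 : ℕ) = 1 := by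
  apply RelIso.ext
  intro v
  rw [phi0_pow]
  show _ = v
  revert v; decide

lemma orderOf_phi0 : orderOf phi0 = 4 := by
  have hdvd : orderOf phi0 ∣ 4 := orderOf_dvd_of_pow_eq_one phi0_pow4
  have h1 : phi0 ≠ 1 := by
    intro h
    have h2 : phi0 0 = (1 : Gamma 4 ≃g Gamma 4) 0 := by rw [h]
    have h3 : phi0 0 = 0 := h2
    exact absurd h3 (by decide)
  have h2 : phi0 ^ 2 ≠ 1 := by
    intro h
    have h2 : (phi0 ^ 2) 0 = (1 : Gamma 4 ≃g Gamma 4) 0 := by rw [h]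
    rw [phi0_pow] at h2
    have h3 : (gFun 4)^[2] (0 : Fin 10) = 0 := h2
    exact absurd h3 (by decide)
  have hle := Nat.le_of_dvd (by norm_num) hdvd
  have hpos : 0 < orderOf phi0 := Nat.pos_of_dvd_of_pos hdvd (by norm_num)
  interval_cases h : orderOf phi0
  · exact absurd (orderOf_eq_one_iff.mp h) h1
  · exact absurd (h ▸ pow_orderOf_eq_one phi0) h2
  · exact absurd hdvd (by decide)
  · rfl

lemma hgen : ∀ f : Gamma 4 ≃g Gamma 4, f ∈ Subgroup.zpowers phi0 := by
  intro f
  rcases classify f with h | h | h | h <;>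
    (rw [h]; exact Subgroup.pow_mem _ (Subgroup.mem_zpowers phi0) _)

def homZ : Multiplicative (ZMod 4) →* (Gamma 4 ≃g Gamma 4) :=
  MonoidHom.mk' (fun k => phi0 ^ (Multiplicative.toAdd k).val) (by
    intro a b
    show phi0 ^ ((a * b).toAdd).val = _
    rw [toAdd_mul, ZMod.val_add, ← pow_add]
    have h := pow_mod_orderOf phi0 ((Multiplicative.toAdd a).val + (Multiplicative.toAdd b).val)
    rw [orderOf_phi0] at h
    exact h)

lemma homZ_bij : Function.Bijective homZ := by
  constructor
  · rw [injective_iff_map_eq_one]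
    intro a ha
    have ha' : phi0 ^ (Multiplicative.toAdd a).val = 1 := ha
    have hdvd := orderOf_dvd_of_pow_eq_one ha'
    rw [orderOf_phi0] at hdvd
    have hlt : (Multiplicative.toAdd a).val < 4 := ZMod.val_lt _
    have hv : (Multiplicative.toAdd a).val = 0 := by omega
    have : Multiplicative.toAdd a = 0 := (ZMod.val_eq_zero _).mp hv
    exact toAdd_eq_zero.mp this
  · intro f
    obtain ⟨k, hk⟩ := Subgroup.mem_zpowers_iff.mp (hgen f)
    refine ⟨Multiplicative.ofAdd ((k : ZMod 4)), ?_⟩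
    show phi0 ^ ((Multiplicative.ofAdd ((k : ZMod 4))).toAdd).val = f
    rw [toAdd_ofAdd]
    have hval : (((k : ZMod 4)).val : ℤ) = k % 4 := ZMod.val_intCast k
    have h0le : 0 ≤ k % 4 := Int.emod_nonneg k (by norm_num)
    have h4z : phi0 ^ (4 : ℤ) = 1 := by
      rw [show (4 : ℤ) = ((4 : ℕ) : ℤ) by norm_num, zpow_natCast, phi0_pow4]
    have hsplit : phi0 ^ k = phi0 ^ ((k : ZMod 4)).val := by
      conv_lhs => rw [← Int.mul_ediv_add_emod k 4]
      rw [zpow_add, zpow_mul, h4z, one_zpow, one_mul,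
        show k % 4 = (((k : ZMod 4)).val : ℤ) from hval.symm, zpow_natCast]
    rw [← hsplit]; exact hk


/-- `Γ_4` is a 10-vertex graph with `Aut(Γ_4) ≅ ℤ/4ℤ`, generated
    by `(1,2,3,4)(5,6,7,8)(9,10)`. -/
theorem stmt9 :
    ∃ φ : Gamma 4 ≃g Gamma 4, ⇑φ = gFun 4 ∧
      (∀ f : Gamma 4 ≃g Gamma 4, f ∈ Subgroup.zpowers φ) ∧
      Nonempty ((Gamma 4 ≃g Gamma 4) ≃* Multiplicative (ZMod 4)) := by
  exact ⟨phi0, rfl, hgen, ⟨(MulEquiv.ofBijective homZ homZ_bij).symm⟩⟩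
end

section
/- In the graph Γ_m with n ≥ 2, n ≠ 3, if f is an automorphism with f(1) = k where k ≡ 1 (mod 2), then f(m+5) = m+5; if k ≡ 0 (mod 2), then f(m+5) = m+6. -/
lemma count_mod2 (M r : ℕ) (hr : r < 2) :
    ((Finset.range (2*M)).filter (fun i => i % 2 = r)).card = M := by
  induction M with
  | zero => simp
  | succ M ih =>
    have h : (Finset.range (2*(M+1))).filter (fun i => i % 2 = r) =
        insert (2*M+r) ((Finset.range (2*M)).filter (fun i => i % 2 = r)) := by
      ext i
      simp only [Finset.mem_filter, Finset.mem_range, Finset.mem_insert]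
      omega
    rw [h, Finset.card_insert_of_notMem (by simp only [Finset.mem_filter, Finset.mem_range, Finset.mem_insert]; omega), ih]

lemma count_mod4_pair (M r s : ℕ) (hrs : r < s) (hs : s < 4) :
    ((Finset.range (4*M)).filter (fun i => i % 4 = r ∨ i % 4 = s)).card = 2*M := by
  induction M with
  | zero => simp
  | succ M ih =>
    have h : (Finset.range (4*(M+1))).filter (fun i => i % 4 = r ∨ i % 4 = s) =
        insert (4*M+s) (insert (4*M+r)
          ((Finset.range (4*M)).filter (fun i => i % 4 = r ∨ i % 4 = s))) := by
      ext i
      simp only [Finset.mem_filter, Finset.mem_range, Finset.mem_insert]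
      omega
    rw [h, Finset.card_insert_of_notMem (by simp only [Finset.mem_filter, Finset.mem_range, Finset.mem_insert]; omega),
        Finset.card_insert_of_notMem (by simp only [Finset.mem_filter, Finset.mem_range, Finset.mem_insert]; omega), ih]
    omega

lemma fin_filter_card (N : ℕ) (q : ℕ → Prop) [DecidablePred q] :
    (Finset.univ.filter (fun b : Fin N => q b.val)).card
      = ((Finset.range N).filter q).card := by
  apply Finset.card_bij (fun b _ => b.val)
  · intro a ha; simp only [Finset.mem_filter, Finset.mem_range, Finset.mem_univ, true_and] at ha ⊢
    exact ⟨a.isLt, ha⟩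
  · intro a _ b _ h; exact Fin.ext h
  · intro b hb; simp only [Finset.mem_filter, Finset.mem_range] at hb
    exact ⟨⟨b, hb.1⟩, by simp [hb.2], rfl⟩

set_option maxHeartbeats 1000000

lemma fin_card_eq {N : ℕ} {p : Fin N → Prop} [DecidablePred p] {t : Finset ℕ}
    (h1 : ∀ i ∈ t, i < N) (h2 : ∀ b : Fin N, p b ↔ b.val ∈ t) :
    (Finset.univ.filter p).card = t.card := by
  apply Finset.card_bij (fun b _ => b.val)
  · intro a ha
    simp only [Finset.mem_filter, Finset.mem_univ, true_and] at ha
    exact (h2 a).mp ha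
  · intro a _ b _ h; exact Fin.ext h
  · intro b hb
    exact ⟨⟨b, h1 b hb⟩, Finset.mem_filter.mpr ⟨Finset.mem_univ _, (h2 _).mpr hb⟩, rfl⟩

lemma card5 {α : Type*} [DecidableEq α] {a b c d e : α}
    (h1 : a≠b) (h2 : a≠c) (h3 : a≠d) (h4 : a≠e) (h5 : b≠c) (h6 : b≠d) (h7 : b≠e)
    (h8 : c≠d) (h9 : c≠e) (h10 : d≠e) :
    ({a,b,c,d,e} : Finset α).card = 5 := by
  rw [Finset.card_insert_of_notMem (by simp [h1,h2,h3,h4]),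
      Finset.card_insert_of_notMem (by simp [h5,h6,h7]),
      Finset.card_insert_of_notMem (by simp [h8,h9]),
      Finset.card_insert_of_notMem (by simp [h10]), Finset.card_singleton]

lemma iso_degree {V W : Type*} [Fintype V] [Fintype W] [DecidableEq W]
    {G : SimpleGraph V} {H : SimpleGraph W}
    [DecidableRel G.Adj] [DecidableRel H.Adj] (f : G ≃g H) (v : V) :
    H.degree (f v) = G.degree v := by
  unfold SimpleGraph.degree
  rw [← Finset.card_image_of_injective _ (f.toEquiv.injective)]
  congr 1
  ext b
  simp only [SimpleGraph.mem_neighborFinset, Finset.mem_image]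
  constructor
  · intro h
    refine ⟨f.symm b, ?_, by simp⟩
    have := f.symm.map_adj_iff.mpr h
    simpa using this
  · rintro ⟨a, ha, rfl⟩
    exact f.map_adj_iff.mpr ha

lemma deg_cyc (m : ℕ) (h4 : m % 4 = 0) (hm : 4 ≤ m) (v : Fin (m+6)) (hv : v.val < m) :
    (Gamma m).degree v = 5 := by
  have hx4 : v.val % 4 = 0 ∨ v.val % 4 = 1 ∨ v.val % 4 = 2 ∨ v.val % 4 = 3 := by omega
  rcases eq_or_ne v.val 0 with h0 | h0
  · have hset : (Gamma m).neighborFinset v = ({⟨1, by omega⟩, ⟨m-1, by omega⟩, ⟨m, by omega⟩, ⟨m+3, by omega⟩, ⟨m+4, by omega⟩} : Finset (Fin (m+6))) := by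
      ext b
      have hb := b.isLt
      rw [SimpleGraph.mem_neighborFinset]
      simp only [SimpleGraph.mem_neighborFinset, Gamma, rel0, Finset.mem_insert,
          Finset.mem_singleton, Finset.mem_filter, Finset.mem_univ, true_and, and_true, ne_eq,
          Fin.ext_iff]
      constructor
      · rintro ⟨hne, h | h⟩ <;>
          rcases h with (h|h|h|h|h|h|h|h|h|h|h|h) <;> omega
      · rintro (h|h|h|h|h)
        · exact ⟨by omega, Or.inl (Or.inl (by first | trivial | omega))⟩
        · exact ⟨by omega, Or.inl (Or.inr (Or.inl (by first | trivial | omega)))⟩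
        · exact ⟨by omega, Or.inr (Or.inr (Or.inr (Or.inl (by first | trivial | omega))))⟩
        · exact ⟨by omega, Or.inr (Or.inr (Or.inr (Or.inr (Or.inr (Or.inr (Or.inl (by first | trivial | omega)))))))⟩
        · exact ⟨by omega, Or.inr (Or.inr (Or.inr (Or.inr (Or.inr (Or.inr (Or.inr (Or.inl (by first | trivial | omega))))))))⟩
    rw [← SimpleGraph.card_neighborFinset_eq_degree, hset]
    exact card5 (by simp only [ne_eq, Fin.mk.injEq]; omega) (by simp only [ne_eq, Fin.mk.injEq]; omega) (by simp only [ne_eq, Fin.mk.injEq]; omega) (by simp only [ne_eq, Fin.mk.injEq]; omega) (by simp only [ne_eq, Fin.mk.injEq]; omega) (by simp only [ne_eq, Fin.mk.injEq]; omega) (by simp only [ne_eq, Fin.mk.injEq]; omega) (by simp only [ne_eq, Fin.mk.injEq]; omega) (by simp only [ne_eq, Fin.mk.injEq]; omega) (by simp only [ne_eq, Fin.mk.injEq]; omega)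
  rcases eq_or_ne v.val (m-1) with h1 | h1
  · have hset : (Gamma m).neighborFinset v = ({⟨0, by omega⟩, ⟨m-2, by omega⟩, ⟨m+2, by omega⟩, ⟨m+3, by omega⟩, ⟨m+5, by omega⟩} : Finset (Fin (m+6))) := by
      ext b
      have hb := b.isLt
      rw [SimpleGraph.mem_neighborFinset]
      simp only [SimpleGraph.mem_neighborFinset, Gamma, rel0, Finset.mem_insert,
          Finset.mem_singleton, Finset.mem_filter, Finset.mem_univ, true_and, and_true, ne_eq,
          Fin.ext_iff]
      constructor
      · rintro ⟨hne, h | h⟩ <;>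
          rcases h with (h|h|h|h|h|h|h|h|h|h|h|h) <;> omega
      · rintro (h|h|h|h|h)
        · exact ⟨by omega, Or.inr (Or.inr (Or.inl (by first | trivial | omega)))⟩
        · exact ⟨by omega, Or.inr (Or.inl (by first | trivial | omega))⟩
        · exact ⟨by omega, Or.inr (Or.inr (Or.inr (Or.inr (Or.inr (Or.inl (by first | trivial | omega))))))⟩
        · exact ⟨by omega, Or.inr (Or.inr (Or.inr (Or.inr (Or.inr (Or.inr (Or.inl (by first | trivial | omega)))))))⟩
        · exact ⟨by omega, Or.inr (Or.inr (Or.inr (Or.inr (Or.inr (Or.inr (Or.inr (Or.inr (Or.inl (by first | trivial | omega)))))))))⟩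
    rw [← SimpleGraph.card_neighborFinset_eq_degree, hset]
    exact card5 (by simp only [ne_eq, Fin.mk.injEq]; omega) (by simp only [ne_eq, Fin.mk.injEq]; omega) (by simp only [ne_eq, Fin.mk.injEq]; omega) (by simp only [ne_eq, Fin.mk.injEq]; omega) (by simp only [ne_eq, Fin.mk.injEq]; omega) (by simp only [ne_eq, Fin.mk.injEq]; omega) (by simp only [ne_eq, Fin.mk.injEq]; omega) (by simp only [ne_eq, Fin.mk.injEq]; omega) (by simp only [ne_eq, Fin.mk.injEq]; omega) (by simp only [ne_eq, Fin.mk.injEq]; omega)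
  have hlow : 1 ≤ v.val := by omega
  have hhigh : v.val + 1 < m := by omega
  rcases hx4 with hr | hr | hr | hr
  · have hset : (Gamma m).neighborFinset v = ({⟨v.val-1, by omega⟩, ⟨v.val+1, by omega⟩, ⟨m, by omega⟩, ⟨m+3, by omega⟩, ⟨m+4, by omega⟩} : Finset (Fin (m+6))) := by
      ext b
      have hb := b.isLt
      rw [SimpleGraph.mem_neighborFinset]
      simp only [SimpleGraph.mem_neighborFinset, Gamma, rel0, Finset.mem_insert,
          Finset.mem_singleton, Finset.mem_filter, Finset.mem_univ, true_and, and_true, ne_eq,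
          Fin.ext_iff]
      constructor
      · rintro ⟨hne, h | h⟩ <;>
          rcases h with (h|h|h|h|h|h|h|h|h|h|h|h) <;> omega
      · rintro (h|h|h|h|h)
        · exact ⟨by omega, Or.inr (Or.inl (by first | trivial | omega))⟩
        · exact ⟨by omega, Or.inl (Or.inl (by first | trivial | omega))⟩
        · exact ⟨by omega, Or.inr (Or.inr (Or.inr (Or.inl (by first | trivial | omega))))⟩
        · exact ⟨by omega, Or.inr (Or.inr (Or.inr (Or.inr (Or.inr (Or.inr (Or.inl (by first | trivial | omega)))))))⟩
        · exact ⟨by omega, Or.inr (Or.inr (Or.inr (Or.inr (Or.inr (Or.inr (Or.inr (Or.inl (by first | trivial | omega))))))))⟩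
    rw [← SimpleGraph.card_neighborFinset_eq_degree, hset]
    exact card5 (by simp only [ne_eq, Fin.mk.injEq]; omega) (by simp only [ne_eq, Fin.mk.injEq]; omega) (by simp only [ne_eq, Fin.mk.injEq]; omega) (by simp only [ne_eq, Fin.mk.injEq]; omega) (by simp only [ne_eq, Fin.mk.injEq]; omega) (by simp only [ne_eq, Fin.mk.injEq]; omega) (by simp only [ne_eq, Fin.mk.injEq]; omega) (by simp only [ne_eq, Fin.mk.injEq]; omega) (by simp only [ne_eq, Fin.mk.injEq]; omega) (by simp only [ne_eq, Fin.mk.injEq]; omega)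
  · have hset : (Gamma m).neighborFinset v = ({⟨v.val-1, by omega⟩, ⟨v.val+1, by omega⟩, ⟨m, by omega⟩, ⟨m+1, by omega⟩, ⟨m+5, by omega⟩} : Finset (Fin (m+6))) := by
      ext b
      have hb := b.isLt
      rw [SimpleGraph.mem_neighborFinset]
      simp only [SimpleGraph.mem_neighborFinset, Gamma, rel0, Finset.mem_insert,
          Finset.mem_singleton, Finset.mem_filter, Finset.mem_univ, true_and, and_true, ne_eq,
          Fin.ext_iff]
      constructor
      · rintro ⟨hne, h | h⟩ <;>
          rcases h with (h|h|h|h|h|h|h|h|h|h|h|h) <;> omega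
      · rintro (h|h|h|h|h)
        · exact ⟨by omega, Or.inr (Or.inl (by first | trivial | omega))⟩
        · exact ⟨by omega, Or.inl (Or.inl (by first | trivial | omega))⟩
        · exact ⟨by omega, Or.inr (Or.inr (Or.inr (Or.inl (by first | trivial | omega))))⟩
        · exact ⟨by omega, Or.inr (Or.inr (Or.inr (Or.inr (Or.inl (by first | trivial | omega)))))⟩
        · exact ⟨by omega, Or.inr (Or.inr (Or.inr (Or.inr (Or.inr (Or.inr (Or.inr (Or.inr (Or.inl (by first | trivial | omega)))))))))⟩
    rw [← SimpleGraph.card_neighborFinset_eq_degree, hset]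
    exact card5 (by simp only [ne_eq, Fin.mk.injEq]; omega) (by simp only [ne_eq, Fin.mk.injEq]; omega) (by simp only [ne_eq, Fin.mk.injEq]; omega) (by simp only [ne_eq, Fin.mk.injEq]; omega) (by simp only [ne_eq, Fin.mk.injEq]; omega) (by simp only [ne_eq, Fin.mk.injEq]; omega) (by simp only [ne_eq, Fin.mk.injEq]; omega) (by simp only [ne_eq, Fin.mk.injEq]; omega) (by simp only [ne_eq, Fin.mk.injEq]; omega) (by simp only [ne_eq, Fin.mk.injEq]; omega)
  · have hset : (Gamma m).neighborFinset v = ({⟨v.val-1, by omega⟩, ⟨v.val+1, by omega⟩, ⟨m+1, by omega⟩, ⟨m+2, by omega⟩, ⟨m+4, by omega⟩} : Finset (Fin (m+6))) := by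
      ext b
      have hb := b.isLt
      rw [SimpleGraph.mem_neighborFinset]
      simp only [SimpleGraph.mem_neighborFinset, Gamma, rel0, Finset.mem_insert,
          Finset.mem_singleton, Finset.mem_filter, Finset.mem_univ, true_and, and_true, ne_eq,
          Fin.ext_iff]
      constructor
      · rintro ⟨hne, h | h⟩ <;>
          rcases h with (h|h|h|h|h|h|h|h|h|h|h|h) <;> omega
      · rintro (h|h|h|h|h)
        · exact ⟨by omega, Or.inr (Or.inl (by first | trivial | omega))⟩
        · exact ⟨by omega, Or.inl (Or.inl (by first | trivial | omega))⟩
        · exact ⟨by omega, Or.inr (Or.inr (Or.inr (Or.inr (Or.inl (by first | trivial | omega)))))⟩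
        · exact ⟨by omega, Or.inr (Or.inr (Or.inr (Or.inr (Or.inr (Or.inl (by first | trivial | omega))))))⟩
        · exact ⟨by omega, Or.inr (Or.inr (Or.inr (Or.inr (Or.inr (Or.inr (Or.inr (Or.inl (by first | trivial | omega))))))))⟩
    rw [← SimpleGraph.card_neighborFinset_eq_degree, hset]
    exact card5 (by simp only [ne_eq, Fin.mk.injEq]; omega) (by simp only [ne_eq, Fin.mk.injEq]; omega) (by simp only [ne_eq, Fin.mk.injEq]; omega) (by simp only [ne_eq, Fin.mk.injEq]; omega) (by simp only [ne_eq, Fin.mk.injEq]; omega) (by simp only [ne_eq, Fin.mk.injEq]; omega) (by simp only [ne_eq, Fin.mk.injEq]; omega) (by simp only [ne_eq, Fin.mk.injEq]; omega) (by simp only [ne_eq, Fin.mk.injEq]; omega) (by simp only [ne_eq, Fin.mk.injEq]; omega)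
  · have hset : (Gamma m).neighborFinset v = ({⟨v.val-1, by omega⟩, ⟨v.val+1, by omega⟩, ⟨m+2, by omega⟩, ⟨m+3, by omega⟩, ⟨m+5, by omega⟩} : Finset (Fin (m+6))) := by
      ext b
      have hb := b.isLt
      rw [SimpleGraph.mem_neighborFinset]
      simp only [SimpleGraph.mem_neighborFinset, Gamma, rel0, Finset.mem_insert,
          Finset.mem_singleton, Finset.mem_filter, Finset.mem_univ, true_and, and_true, ne_eq,
          Fin.ext_iff]
      constructor
      · rintro ⟨hne, h | h⟩ <;>
          rcases h with (h|h|h|h|h|h|h|h|h|h|h|h) <;> omega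
      · rintro (h|h|h|h|h)
        · exact ⟨by omega, Or.inr (Or.inl (by first | trivial | omega))⟩
        · exact ⟨by omega, Or.inl (Or.inl (by first | trivial | omega))⟩
        · exact ⟨by omega, Or.inr (Or.inr (Or.inr (Or.inr (Or.inr (Or.inl (by first | trivial | omega))))))⟩
        · exact ⟨by omega, Or.inr (Or.inr (Or.inr (Or.inr (Or.inr (Or.inr (Or.inl (by first | trivial | omega)))))))⟩
        · exact ⟨by omega, Or.inr (Or.inr (Or.inr (Or.inr (Or.inr (Or.inr (Or.inr (Or.inr (Or.inl (by first | trivial | omega)))))))))⟩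
    rw [← SimpleGraph.card_neighborFinset_eq_degree, hset]
    exact card5 (by simp only [ne_eq, Fin.mk.injEq]; omega) (by simp only [ne_eq, Fin.mk.injEq]; omega) (by simp only [ne_eq, Fin.mk.injEq]; omega) (by simp only [ne_eq, Fin.mk.injEq]; omega) (by simp only [ne_eq, Fin.mk.injEq]; omega) (by simp only [ne_eq, Fin.mk.injEq]; omega) (by simp only [ne_eq, Fin.mk.injEq]; omega) (by simp only [ne_eq, Fin.mk.injEq]; omega) (by simp only [ne_eq, Fin.mk.injEq]; omega) (by simp only [ne_eq, Fin.mk.injEq]; omega)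

lemma deg_q0 (m : ℕ) (h4 : m % 4 = 0) (hm : 4 ≤ m) :
    (Gamma m).degree ⟨m+0, by omega⟩ = m/2 + 1 := by
  have hset : (Gamma m).neighborFinset ⟨m+0, by omega⟩ =
      insert ⟨m+4, by omega⟩
        (Finset.univ.filter (fun b : Fin (m+6) => b.val < m ∧ (b.val % 4 = 0 ∨ b.val % 4 = 1))) := by
    ext b
    have hb := b.isLt
    rw [SimpleGraph.mem_neighborFinset]
    simp only [SimpleGraph.mem_neighborFinset, Gamma, rel0, Finset.mem_insert,
        Finset.mem_singleton, Finset.mem_filter, Finset.mem_univ, true_and, and_true, ne_eq,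
        Fin.ext_iff]
    constructor
    · rintro ⟨hne, h | h⟩ <;>
        rcases h with (h|h|h|h|h|h|h|h|h|h|h|h) <;> omega
    · rintro (h|⟨h,h2⟩)
      · exact ⟨by omega, Or.inl (Or.inr (Or.inr (Or.inr (Or.inr (Or.inr (Or.inr (Or.inr (Or.inr (Or.inl (by first | trivial | omega))))))))))⟩
      · exact ⟨by omega, Or.inl (Or.inr (Or.inr (Or.inl (by first | trivial | omega))))⟩
  have e1 := fin_card_eq (N := m+6)
    (p := fun b : Fin (m+6) => b.val < m ∧ (b.val % 4 = 0 ∨ b.val % 4 = 1))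
    (t := (Finset.range (4*(m/4))).filter (fun i => i % 4 = 0 ∨ i % 4 = 1))
    (by intro i hi; simp only [Finset.mem_filter, Finset.mem_range] at hi; omega)
    (by intro b; simp only [Finset.mem_filter, Finset.mem_range]; omega)
  rw [← SimpleGraph.card_neighborFinset_eq_degree, hset,
    Finset.card_insert_of_notMem
      (by simp only [Finset.mem_filter, Finset.mem_univ, true_and, Fin.mk.injEq]; omega),
    e1, count_mod4_pair _ 0 1 (by omega) (by omega)]
  omega

lemma deg_q1 (m : ℕ) (h4 : m % 4 = 0) (hm : 4 ≤ m) :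
    (Gamma m).degree ⟨m+1, by omega⟩ = m/2 + 1 := by
  have hset : (Gamma m).neighborFinset ⟨m+1, by omega⟩ =
      insert ⟨m+5, by omega⟩
        (Finset.univ.filter (fun b : Fin (m+6) => b.val < m ∧ (b.val % 4 = 1 ∨ b.val % 4 = 2))) := by
    ext b
    have hb := b.isLt
    rw [SimpleGraph.mem_neighborFinset]
    simp only [SimpleGraph.mem_neighborFinset, Gamma, rel0, Finset.mem_insert,
        Finset.mem_singleton, Finset.mem_filter, Finset.mem_univ, true_and, and_true, ne_eq,
        Fin.ext_iff]
    constructor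
    · rintro ⟨hne, h | h⟩ <;>
        rcases h with (h|h|h|h|h|h|h|h|h|h|h|h) <;> omega
    · rintro (h|⟨h,h2⟩)
      · exact ⟨by omega, Or.inl (Or.inr (Or.inr (Or.inr (Or.inr (Or.inr (Or.inr (Or.inr (Or.inr (Or.inr (Or.inr (Or.inl (by first | trivial | omega))))))))))))⟩
      · exact ⟨by omega, Or.inl (Or.inr (Or.inr (Or.inr (Or.inl (by first | trivial | omega)))))⟩
  have e1 := fin_card_eq (N := m+6)
    (p := fun b : Fin (m+6) => b.val < m ∧ (b.val % 4 = 1 ∨ b.val % 4 = 2))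
    (t := (Finset.range (4*(m/4))).filter (fun i => i % 4 = 1 ∨ i % 4 = 2))
    (by intro i hi; simp only [Finset.mem_filter, Finset.mem_range] at hi; omega)
    (by intro b; simp only [Finset.mem_filter, Finset.mem_range]; omega)
  rw [← SimpleGraph.card_neighborFinset_eq_degree, hset,
    Finset.card_insert_of_notMem
      (by simp only [Finset.mem_filter, Finset.mem_univ, true_and, Fin.mk.injEq]; omega),
    e1, count_mod4_pair _ 1 2 (by omega) (by omega)]
  omega

lemma deg_q2 (m : ℕ) (h4 : m % 4 = 0) (hm : 4 ≤ m) :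
    (Gamma m).degree ⟨m+2, by omega⟩ = m/2 + 1 := by
  have hset : (Gamma m).neighborFinset ⟨m+2, by omega⟩ =
      insert ⟨m+4, by omega⟩
        (Finset.univ.filter (fun b : Fin (m+6) => b.val < m ∧ (b.val % 4 = 2 ∨ b.val % 4 = 3))) := by
    ext b
    have hb := b.isLt
    rw [SimpleGraph.mem_neighborFinset]
    simp only [SimpleGraph.mem_neighborFinset, Gamma, rel0, Finset.mem_insert,
        Finset.mem_singleton, Finset.mem_filter, Finset.mem_univ, true_and, and_true, ne_eq,
        Fin.ext_iff]
    constructor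
    · rintro ⟨hne, h | h⟩ <;>
        rcases h with (h|h|h|h|h|h|h|h|h|h|h|h) <;> omega
    · rintro (h|⟨h,h2⟩)
      · exact ⟨by omega, Or.inl (Or.inr (Or.inr (Or.inr (Or.inr (Or.inr (Or.inr (Or.inr (Or.inr (Or.inr (Or.inl (by first | trivial | omega)))))))))))⟩
      · exact ⟨by omega, Or.inl (Or.inr (Or.inr (Or.inr (Or.inr (Or.inl (by first | trivial | omega))))))⟩
  have e1 := fin_card_eq (N := m+6)
    (p := fun b : Fin (m+6) => b.val < m ∧ (b.val % 4 = 2 ∨ b.val % 4 = 3))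
    (t := (Finset.range (4*(m/4))).filter (fun i => i % 4 = 2 ∨ i % 4 = 3))
    (by intro i hi; simp only [Finset.mem_filter, Finset.mem_range] at hi; omega)
    (by intro b; simp only [Finset.mem_filter, Finset.mem_range]; omega)
  rw [← SimpleGraph.card_neighborFinset_eq_degree, hset,
    Finset.card_insert_of_notMem
      (by simp only [Finset.mem_filter, Finset.mem_univ, true_and, Fin.mk.injEq]; omega),
    e1, count_mod4_pair _ 2 3 (by omega) (by omega)]
  omega

lemma deg_q3 (m : ℕ) (h4 : m % 4 = 0) (hm : 4 ≤ m) :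
    (Gamma m).degree ⟨m+3, by omega⟩ = m/2 + 1 := by
  have hset : (Gamma m).neighborFinset ⟨m+3, by omega⟩ =
      insert ⟨m+5, by omega⟩
        (Finset.univ.filter (fun b : Fin (m+6) => b.val < m ∧ (b.val % 4 = 0 ∨ b.val % 4 = 3))) := by
    ext b
    have hb := b.isLt
    rw [SimpleGraph.mem_neighborFinset]
    simp only [SimpleGraph.mem_neighborFinset, Gamma, rel0, Finset.mem_insert,
        Finset.mem_singleton, Finset.mem_filter, Finset.mem_univ, true_and, and_true, ne_eq,
        Fin.ext_iff]
    constructor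
    · rintro ⟨hne, h | h⟩ <;>
        rcases h with (h|h|h|h|h|h|h|h|h|h|h|h) <;> omega
    · rintro (h|⟨h,h2⟩)
      · exact ⟨by omega, Or.inl (Or.inr (Or.inr (Or.inr (Or.inr (Or.inr (Or.inr (Or.inr (Or.inr (Or.inr (Or.inr (Or.inr ((by first | trivial | omega)))))))))))))⟩
      · exact ⟨by omega, Or.inl (Or.inr (Or.inr (Or.inr (Or.inr (Or.inr (Or.inl (by first | trivial | omega)))))))⟩
  have e1 := fin_card_eq (N := m+6)
    (p := fun b : Fin (m+6) => b.val < m ∧ (b.val % 4 = 0 ∨ b.val % 4 = 3))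
    (t := (Finset.range (4*(m/4))).filter (fun i => i % 4 = 0 ∨ i % 4 = 3))
    (by intro i hi; simp only [Finset.mem_filter, Finset.mem_range] at hi; omega)
    (by intro b; simp only [Finset.mem_filter, Finset.mem_range]; omega)
  rw [← SimpleGraph.card_neighborFinset_eq_degree, hset,
    Finset.card_insert_of_notMem
      (by simp only [Finset.mem_filter, Finset.mem_univ, true_and, Fin.mk.injEq]; omega),
    e1, count_mod4_pair _ 0 3 (by omega) (by omega)]
  omega

lemma deg_p4 (m : ℕ) (h4 : m % 4 = 0) (hm : 4 ≤ m) :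
    (Gamma m).degree ⟨m+4, by omega⟩ = m/2 + 2 := by
  have hset : (Gamma m).neighborFinset ⟨m+4, by omega⟩ =
      insert ⟨m+0, by omega⟩ (insert ⟨m+2, by omega⟩
        (Finset.univ.filter (fun b : Fin (m+6) => b.val < m ∧ b.val % 2 = 0))) := by
    ext b
    have hb := b.isLt
    rw [SimpleGraph.mem_neighborFinset]
    simp only [SimpleGraph.mem_neighborFinset, Gamma, rel0, Finset.mem_insert,
        Finset.mem_singleton, Finset.mem_filter, Finset.mem_univ, true_and, and_true, ne_eq,
        Fin.ext_iff]
    constructor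
    · rintro ⟨hne, h | h⟩ <;>
        rcases h with (h|h|h|h|h|h|h|h|h|h|h|h) <;> omega
    · rintro (h|h|⟨h,h2⟩)
      · exact ⟨by omega, Or.inr (Or.inr (Or.inr (Or.inr (Or.inr (Or.inr (Or.inr (Or.inr (Or.inr (Or.inl (by first | trivial | omega))))))))))⟩
      · exact ⟨by omega, Or.inr (Or.inr (Or.inr (Or.inr (Or.inr (Or.inr (Or.inr (Or.inr (Or.inr (Or.inr (Or.inl (by first | trivial | omega)))))))))))⟩
      · exact ⟨by omega, Or.inl (Or.inr (Or.inr (Or.inr (Or.inr (Or.inr (Or.inr (Or.inl (by first | trivial | omega))))))))⟩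
  have e1 := fin_card_eq (N := m+6)
    (p := fun b : Fin (m+6) => b.val < m ∧ b.val % 2 = 0)
    (t := (Finset.range (2*(m/2))).filter (fun i => i % 2 = 0))
    (by intro i hi; simp only [Finset.mem_filter, Finset.mem_range] at hi; omega)
    (by intro b; simp only [Finset.mem_filter, Finset.mem_range]; omega)
  rw [← SimpleGraph.card_neighborFinset_eq_degree, hset,
    Finset.card_insert_of_notMem
      (by simp only [Finset.mem_insert, Finset.mem_filter, Finset.mem_univ, true_and,
        Fin.mk.injEq, Fin.ext_iff]; omega),
    Finset.card_insert_of_notMem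
      (by simp only [Finset.mem_filter, Finset.mem_univ, true_and, Fin.mk.injEq]; omega),
    e1, count_mod2 _ 0 (by omega)]

lemma deg_p5 (m : ℕ) (h4 : m % 4 = 0) (hm : 4 ≤ m) :
    (Gamma m).degree ⟨m+5, by omega⟩ = m/2 + 2 := by
  have hset : (Gamma m).neighborFinset ⟨m+5, by omega⟩ =
      insert ⟨m+1, by omega⟩ (insert ⟨m+3, by omega⟩
        (Finset.univ.filter (fun b : Fin (m+6) => b.val < m ∧ b.val % 2 = 1))) := by
    ext b
    have hb := b.isLt
    rw [SimpleGraph.mem_neighborFinset]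
    simp only [SimpleGraph.mem_neighborFinset, Gamma, rel0, Finset.mem_insert,
        Finset.mem_singleton, Finset.mem_filter, Finset.mem_univ, true_and, and_true, ne_eq,
        Fin.ext_iff]
    constructor
    · rintro ⟨hne, h | h⟩ <;>
        rcases h with (h|h|h|h|h|h|h|h|h|h|h|h) <;> omega
    · rintro (h|h|⟨h,h2⟩)
      · exact ⟨by omega, Or.inr (Or.inr (Or.inr (Or.inr (Or.inr (Or.inr (Or.inr (Or.inr (Or.inr (Or.inr (Or.inr (Or.inl (by first | trivial | omega))))))))))))⟩
      · exact ⟨by omega, Or.inr (Or.inr (Or.inr (Or.inr (Or.inr (Or.inr (Or.inr (Or.inr (Or.inr (Or.inr (Or.inr (Or.inr ((by first | trivial | omega)))))))))))))⟩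
      · exact ⟨by omega, Or.inl (Or.inr (Or.inr (Or.inr (Or.inr (Or.inr (Or.inr (Or.inr (Or.inl (by first | trivial | omega)))))))))⟩
  have e1 := fin_card_eq (N := m+6)
    (p := fun b : Fin (m+6) => b.val < m ∧ b.val % 2 = 1)
    (t := (Finset.range (2*(m/2))).filter (fun i => i % 2 = 1))
    (by intro i hi; simp only [Finset.mem_filter, Finset.mem_range] at hi; omega)
    (by intro b; simp only [Finset.mem_filter, Finset.mem_range]; omega)
  rw [← SimpleGraph.card_neighborFinset_eq_degree, hset,
    Finset.card_insert_of_notMem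
      (by simp only [Finset.mem_insert, Finset.mem_filter, Finset.mem_univ, true_and,
        Fin.mk.injEq, Fin.ext_iff]; omega),
    Finset.card_insert_of_notMem
      (by simp only [Finset.mem_filter, Finset.mem_univ, true_and, Fin.mk.injEq]; omega),
    e1, count_mod2 _ 1 (by omega)]

/-- for `n ≠ 3`, if `f ∈ Aut(Γ_m)` and `f(1) = k`, then
    `f(m+5) = m+5` when `k` is odd, and `f(m+5) = m+6` when `k` is even. -/
theorem stmt12 (n m : ℕ) (hn : 2 ≤ n) (hn3 : n ≠ 3) (hm : m = 2 ^ n) :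
    ∀ f : Gamma m ≃g Gamma m, ∀ k : Fin (m + 6),
      f ⟨0, by omega⟩ = k →
      (((k.val + 1) % 2 = 1 → f ⟨m + 4, by omega⟩ = ⟨m + 4, by omega⟩) ∧
       ((k.val + 1) % 2 = 0 → f ⟨m + 4, by omega⟩ = ⟨m + 5, by omega⟩)) := by
  obtain ⟨j, rfl⟩ : ∃ j, n = 2 + j := ⟨n - 2, by omega⟩
  have hmj : m = 4 * 2 ^ j := by rw [hm, pow_add]; ring
  have h4 : m % 4 = 0 := by omega
  have hm4 : 4 ≤ m := by have : 1 ≤ 2 ^ j := Nat.one_le_two_pow; omega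
  have hm8 : m ≠ 8 := by
    intro h
    have h8 : (2:ℕ) ^ (2+j) = 2 ^ 3 := by rw [← hm, h]; norm_num
    have := Nat.pow_right_injective (le_refl 2) h8
    omega
  intro f k hk
  have hdegk : (Gamma m).degree k = 5 := by
    rw [← hk, iso_degree]
    exact deg_cyc m h4 hm4 _ (by show 0 < m; omega)
  have hkm : k.val < m := by
    by_contra hge
    push_neg at hge
    have hb := k.isLt
    have hcase : k.val = m+0 ∨ k.val = m+1 ∨ k.val = m+2 ∨ k.val = m+3 ∨
        k.val = m+4 ∨ k.val = m+5 := by omega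
    rcases hcase with h|h|h|h|h|h
    · rw [show k = (⟨m+0, by omega⟩ : Fin (m+6)) from Fin.ext h, deg_q0 m h4 hm4] at hdegk; omega
    · rw [show k = (⟨m+1, by omega⟩ : Fin (m+6)) from Fin.ext h, deg_q1 m h4 hm4] at hdegk; omega
    · rw [show k = (⟨m+2, by omega⟩ : Fin (m+6)) from Fin.ext h, deg_q2 m h4 hm4] at hdegk; omega
    · rw [show k = (⟨m+3, by omega⟩ : Fin (m+6)) from Fin.ext h, deg_q3 m h4 hm4] at hdegk; omega
    · rw [show k = (⟨m+4, by omega⟩ : Fin (m+6)) from Fin.ext h, deg_p4 m h4 hm4] at hdegk; omega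
    · rw [show k = (⟨m+5, by omega⟩ : Fin (m+6)) from Fin.ext h, deg_p5 m h4 hm4] at hdegk; omega
  set w := f ⟨m+4, by omega⟩ with hw
  have hdegw : (Gamma m).degree w = m/2 + 2 := by
    rw [hw, iso_degree]
    exact deg_p4 m h4 hm4
  have hwval : w.val = m+4 ∨ w.val = m+5 := by
    by_contra hcon
    push_neg at hcon
    have hb := w.isLt
    rcases Nat.lt_or_ge w.val m with h|h
    · rw [deg_cyc m h4 hm4 w h] at hdegw; omega
    · have hcase : w.val = m+0 ∨ w.val = m+1 ∨ w.val = m+2 ∨ w.val = m+3 := by omega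
      rcases hcase with h|h|h|h
      · rw [show w = (⟨m+0, by omega⟩ : Fin (m+6)) from Fin.ext h, deg_q0 m h4 hm4] at hdegw; omega
      · rw [show w = (⟨m+1, by omega⟩ : Fin (m+6)) from Fin.ext h, deg_q1 m h4 hm4] at hdegw; omega
      · rw [show w = (⟨m+2, by omega⟩ : Fin (m+6)) from Fin.ext h, deg_q2 m h4 hm4] at hdegw; omega
      · rw [show w = (⟨m+3, by omega⟩ : Fin (m+6)) from Fin.ext h, deg_q3 m h4 hm4] at hdegw; omega
  have hadj : (Gamma m).Adj ⟨0, by omega⟩ ⟨m+4, by omega⟩ := by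
    refine ⟨by simp only [ne_eq, Fin.mk.injEq] <;> omega, Or.inr ?_⟩
    show rel0 m (m+4+1) (0+1)
    unfold rel0
    omega
  have hadj2 : (Gamma m).Adj k w := by
    rw [← hk, hw]
    exact f.map_adj_iff.mpr hadj
  have hrel : k ≠ w ∧ (rel0 m (k.val+1) (w.val+1) ∨ rel0 m (w.val+1) (k.val+1)) := hadj2
  constructor
  · intro hodd
    rcases hwval with h|h
    · exact Fin.ext h
    · exfalso
      obtain ⟨-, hr⟩ := hrel
      unfold rel0 at hr
      omega
  · intro heven
    rcases hwval with h|h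
    · exfalso
      obtain ⟨-, hr⟩ := hrel
      unfold rel0 at hr
      omega
    · exact Fin.ext h
end
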